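/- arXiv:2410.02359 — 2 statements merged into one kernel-verified Lean document; each statement's English description precedes it below -/
import Mathlib

section
/- Let C be an irreducible non-singular affine curve over ℝ, S ⊆ C(ℝ) a compact semialgebraic set without isolated points, V ⊆ ℝ[C] a subspace of dimension n+1, and P = P_{V,S} = {f ∈ V : f|_S ≥ 0}. For 0 ≠ f ∈ P, the linear span of the supporting face F_f of f in P equals V_f = {g ∈ V : ord_ξ(g) ≥ ord_ξ(f) for all ξ ∈ S}. -/
/-- `ordGe d f η m` expresses `ord_η(f) ≥ m`: the first `m` iterated
`d/dt`-derivatives of `f` vanish at the point `η`. -/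
def ordGe {A : Type} [CommRing A] [Algebra ℝ A] (d : Module.End ℝ A)
    (f : A) (η : A →ₐ[ℝ] ℝ) (m : ℕ) : Prop :=
  ∀ s < m, η ((d ^ s) f) = 0

section aux
set_option linter.unusedSectionVars false
set_option linter.unusedVariables false
variable {A : Type} [CommRing A] [Algebra ℝ A]



variable {A : Type} [CommRing A] [Algebra ℝ A]

lemma coeff_unique (t : A)
    (hfree : ∀ ω : Ω[A⁄ℝ], ∃! c : A, ω = c • KaehlerDifferential.D ℝ A t)
    {c c' : A} {ω : Ω[A⁄ℝ]} (h : ω = c • KaehlerDifferential.D ℝ A t)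
    (h' : ω = c' • KaehlerDifferential.D ℝ A t) : c = c' := by
  obtain ⟨u, -, hu⟩ := hfree ω
  rw [hu c h, hu c' h']

lemma d_mul (t : A)
    (hfree : ∀ ω : Ω[A⁄ℝ], ∃! c : A, ω = c • KaehlerDifferential.D ℝ A t)
    (d : Module.End ℝ A)
    (hd : ∀ g : A, KaehlerDifferential.D ℝ A g = d g • KaehlerDifferential.D ℝ A t)
    (x y : A) : d (x * y) = x * d y + y * d x := by
  refine coeff_unique t hfree (hd (x*y)) ?_
  rw [Derivation.leibniz, hd x, hd y, smul_smul, smul_smul, ← add_smul]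

lemma d_t (t : A)
    (hfree : ∀ ω : Ω[A⁄ℝ], ∃! c : A, ω = c • KaehlerDifferential.D ℝ A t)
    (d : Module.End ℝ A)
    (hd : ∀ g : A, KaehlerDifferential.D ℝ A g = d g • KaehlerDifferential.D ℝ A t) :
    d t = 1 := by
  refine coeff_unique t hfree (hd t) ?_
  rw [one_smul]

lemma d_algebraMap (t : A)
    (hfree : ∀ ω : Ω[A⁄ℝ], ∃! c : A, ω = c • KaehlerDifferential.D ℝ A t)
    (d : Module.End ℝ A)
    (hd : ∀ g : A, KaehlerDifferential.D ℝ A g = d g • KaehlerDifferential.D ℝ A t)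
    (r : ℝ) : d (algebraMap ℝ A r) = 0 := by
  refine coeff_unique t hfree (hd _) ?_
  rw [Derivation.map_algebraMap, zero_smul]




variable {A : Type} [CommRing A] [Algebra ℝ A]

/-- the maximal ideal attached to a real point -/
abbrev mIdeal (η : A →ₐ[ℝ] ℝ) : Ideal A := RingHom.ker (η : A →+* ℝ)

lemma mem_mIdeal {η : A →ₐ[ℝ] ℝ} {x : A} : x ∈ mIdeal η ↔ η x = 0 := RingHom.mem_ker

lemma sub_const_mem {η : A →ₐ[ℝ] ℝ} (x : A) : x - algebraMap ℝ A (η x) ∈ mIdeal η := by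
  rw [mem_mIdeal, map_sub, AlgHom.commutes]
  simp

lemma key1 (t : A)
    (hfree : ∀ ω : Ω[A⁄ℝ], ∃! c : A, ω = c • KaehlerDifferential.D ℝ A t)
    (d : Module.End ℝ A)
    (hd : ∀ g : A, KaehlerDifferential.D ℝ A g = d g • KaehlerDifferential.D ℝ A t)
    (η : A →ₐ[ℝ] ℝ) (x : A) (hx : x ∈ mIdeal η) :
    x - algebraMap ℝ A (η (d x)) * (t - algebraMap ℝ A (η t)) ∈ (mIdeal η)^2 := by
  set m : Ideal A := mIdeal η with hm
  set τ : A := t - algebraMap ℝ A (η t) with hτ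
  let Q := A ⧸ (m^2 : Ideal A)
  let π : A →ₗ[A] Q := (m^2 : Ideal A).mkQ
  have hπ0 : ∀ z : A, π z = 0 ↔ z ∈ (m^2 : Ideal A) := fun z => Submodule.Quotient.mk_eq_zero _
  -- the derivation δ
  have hlin : IsLinearMap ℝ (fun a : A => π (a - algebraMap ℝ A (η a))) := by
    constructor
    · intro a b
      rw [map_add, map_add, ← map_add π]
      congr 1
      ring
    · intro r a
      have h1 : η (r • a) = r • η a := map_smul η r a
      rw [h1]
      have h2 : algebraMap ℝ A (r • η a) = r • algebraMap ℝ A (η a) := by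
        rw [Algebra.smul_def, Algebra.smul_def, map_mul]
        simp [Algebra.smul_def]
      rw [h2, ← smul_sub, ← algebraMap_smul A r (a - algebraMap ℝ A (η a)), map_smul,
        algebraMap_smul]
  let δ : Derivation ℝ A Q :=
    { toFun := fun a => π (a - algebraMap ℝ A (η a))
      map_add' := hlin.map_add
      map_smul' := hlin.map_smul
      map_one_eq_zero' := by
        show π (1 - algebraMap ℝ A (η 1)) = 0
        rw [map_one, map_one, sub_self, map_zero]
      leibniz' := by
        intro a b
        show π (a*b - algebraMap ℝ A (η (a*b))) =
          a • π (b - algebraMap ℝ A (η b)) + b • π (a - algebraMap ℝ A (η a))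
        rw [← map_smul π, ← map_smul π, ← map_add π]
        rw [← sub_eq_zero, ← map_sub π, hπ0]
        have : a * b - algebraMap ℝ A (η (a * b)) -
            (a • (b - algebraMap ℝ A (η b)) + b • (a - algebraMap ℝ A (η a)))
            = -((a - algebraMap ℝ A (η a)) * (b - algebraMap ℝ A (η b))) := by
          rw [map_mul, map_mul, smul_eq_mul, smul_eq_mul]
          ring
        rw [this]
        exact neg_mem (by rw [pow_two]; exact Ideal.mul_mem_mul (sub_const_mem a) (sub_const_mem b)) }
  have hδ : ∀ a : A, δ a = π (a - algebraMap ℝ A (η a)) := fun _ => rfl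
  have key : δ x = d x • δ t := by
    have h1 : δ x = δ.liftKaehlerDifferential (KaehlerDifferential.D ℝ A x) :=
      (Derivation.liftKaehlerDifferential_comp_D δ x).symm
    rw [h1, hd x, map_smul, Derivation.liftKaehlerDifferential_comp_D]
  have hx0 : algebraMap ℝ A (η x) = 0 := by rw [mem_mIdeal.mp hx, map_zero]
  have key2 : x - d x * τ ∈ (m^2 : Ideal A) := by
    have := key
    rw [hδ, hδ, hx0, sub_zero, ← map_smul π, smul_eq_mul, ← sub_eq_zero, ← map_sub π, hπ0] at this
    exact this
  have key3 : (d x - algebraMap ℝ A (η (d x))) * τ ∈ (m^2 : Ideal A) := by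
    rw [pow_two]
    exact Ideal.mul_mem_mul (sub_const_mem (d x)) (sub_const_mem t)
  have : x - algebraMap ℝ A (η (d x)) * τ = (x - d x * τ) + (d x - algebraMap ℝ A (η (d x))) * τ := by
    ring
  rw [this]
  exact add_mem key2 key3


lemma d_mem_pow (d : Module.End ℝ A)
    (hmul : ∀ x y : A, d (x * y) = x * d y + y * d x)
    (η : A →ₐ[ℝ] ℝ) :
    ∀ j : ℕ, ∀ x ∈ (mIdeal η)^(j+1), d x ∈ (mIdeal η)^j := by
  intro j
  induction j with
  | zero => intro x _; simp
  | succ j ih =>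
    intro x hx
    rw [pow_succ] at hx
    refine Submodule.mul_induction_on hx ?_ ?_
    · intro a ha b hb
      rw [hmul a b]
      refine add_mem (Ideal.mul_mem_right _ _ ha) ?_
      have : b * d a ∈ mIdeal η * (mIdeal η)^j := Ideal.mul_mem_mul hb (ih a ha)
      rwa [← pow_succ'] at this
    · intro u v hu hv
      rw [map_add]
      exact add_mem hu hv

lemma d_iter_mem_pow (d : Module.End ℝ A)
    (hmul : ∀ x y : A, d (x * y) = x * d y + y * d x)
    (η : A →ₐ[ℝ] ℝ) :
    ∀ s k : ℕ, ∀ x ∈ (mIdeal η)^(k+s), (d^s) x ∈ (mIdeal η)^k := by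
  intro s
  induction s with
  | zero => intro k x hx; simpa using hx
  | succ s ih =>
    intro k x hx
    have h1 : (d^(s+1)) x = (d^s) (d x) := by
      rw [pow_succ, Module.End.mul_apply]
    rw [h1]
    refine ih k (d x) ?_
    have := d_mem_pow d hmul η (k+s) x (by rwa [show k+(s+1) = (k+s)+1 by ring] at hx)
    exact this
section aux2
variable (d : Module.End ℝ A) (η : A →ₐ[ℝ] ℝ)
  (hmul : ∀ x y : A, d (x * y) = x * d y + y * d x)
  (hiter : ∀ s k : ℕ, ∀ x ∈ (mIdeal η)^(k+s), (d^s) x ∈ (mIdeal η)^k)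
  (τ : A) (hτm : τ ∈ mIdeal η) (hdτ : d τ = 1)

include hmul hiter hτm hdτ

lemma ordGe_of_mem_pow {x : A} {k : ℕ} (hx : x ∈ (mIdeal η)^k) : ordGe d x η k := by
  intro s hs
  rw [← mem_mIdeal]
  have h1 : x ∈ (mIdeal η)^((k-s)+s) := by rwa [Nat.sub_add_cancel hs.le]
  have h2 : (d^s) x ∈ (mIdeal η)^(k-s) := hiter s (k-s) x h1
  have h3 : (1:ℕ) ≤ k - s := Nat.le_sub_of_add_le (by omega)
  have h4 : (mIdeal η)^(k-s) ≤ (mIdeal η)^1 := Ideal.pow_le_pow_right h3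
  have h5 := h4 h2
  rwa [pow_one] at h5

lemma d_tau_pow : ∀ k : ℕ, d (τ^(k+1)) = ((k:A)+1) * τ^k := by
  intro k
  induction k with
  | zero => simpa using hdτ
  | succ k ih =>
    have : τ^(k+2) = τ * τ^(k+1) := by ring
    rw [this, hmul, ih, hdτ]
    push_cast
    ring

lemma eta_d_tau_pow : ∀ k : ℕ, ∀ a : A, η ((d^k) (τ^k * a)) = (k.factorial : ℝ) * η a := by
  intro k
  induction k with
  | zero => intro a; simp
  | succ k ih =>
    intro a
    have h1 : (d^(k+1)) (τ^(k+1) * a) = (d^k) (d (τ^(k+1) * a)) := by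
      rw [pow_succ, Module.End.mul_apply]
    have h2 : d (τ^(k+1) * a) = τ^k * (τ * d a + ((k:A)+1) * a) := by
      rw [hmul, d_tau_pow d η hmul hiter τ hτm hdτ]
      ring
    rw [h1, h2, ih]
    have hτ0 : η τ = 0 := mem_mIdeal.mp hτm
    simp only [map_add, map_mul, hτ0, Nat.factorial_succ, zero_mul, map_natCast, map_one,
      map_ofNat]
    push_cast
    ring

lemma mem_pow_decomp
    (hk1 : ∀ x ∈ mIdeal η, x - algebraMap ℝ A (η (d x)) * τ ∈ (mIdeal η)^2) :
    ∀ k : ℕ, ∀ x ∈ (mIdeal η)^k, ∃ a y, y ∈ (mIdeal η)^(k+1) ∧ x = τ^k * a + y := by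
  intro k
  induction k with
  | zero =>
    intro x _
    exact ⟨x, 0, by simpa using Submodule.zero_mem _, by ring⟩
  | succ k ih =>
    intro x hx
    rw [pow_succ] at hx
    refine Submodule.mul_induction_on hx ?_ ?_
    · intro u hu v hv
      obtain ⟨a, y, hy, hu'⟩ := ih u hu
      set c : A := algebraMap ℝ A (η (d v)) with hc
      have hv2 : v - c * τ ∈ (mIdeal η)^2 := hk1 v hv
      refine ⟨a * c, τ^k * a * (v - c*τ) + y * v, ?_, ?_⟩
      · refine add_mem ?_ ?_
        · have : τ^k * a * (v - c*τ) ∈ (mIdeal η)^k * (mIdeal η)^2 := by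
            refine Ideal.mul_mem_mul ?_ hv2
            exact Ideal.mul_mem_right a _ (Ideal.pow_mem_pow hτm k)
          rw [← pow_add] at this
          exact Ideal.pow_le_pow_right (by omega) this
        · have : y * v ∈ (mIdeal η)^(k+1) * mIdeal η := Ideal.mul_mem_mul hy hv
          rwa [← pow_succ] at this
      · rw [hu']
        ring
    · intro u v hu hv
      obtain ⟨a, y, hy, hu'⟩ := hu
      obtain ⟨b, z, hz, hv'⟩ := hv
      exact ⟨a + b, y + z, add_mem hy hz, by rw [hu', hv']; ring⟩

lemma mem_pow_of_ordGe
    (hk1 : ∀ x ∈ mIdeal η, x - algebraMap ℝ A (η (d x)) * τ ∈ (mIdeal η)^2) :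
    ∀ k : ℕ, ∀ x : A, ordGe d x η k → x ∈ (mIdeal η)^k := by
  intro k
  induction k with
  | zero => intro x _; simp
  | succ k ih =>
    intro x hord
    have hxk : x ∈ (mIdeal η)^k := ih x (fun s hs => hord s (by omega))
    obtain ⟨a, y, hy, hxd⟩ := mem_pow_decomp d η hmul hiter τ hτm hdτ hk1 k x hxk
    have h0 : η ((d^k) x) = 0 := hord k (by omega)
    have h1 : η ((d^k) x) = (k.factorial : ℝ) * η a + η ((d^k) y) := by
      rw [hxd, map_add, map_add, eta_d_tau_pow d η hmul hiter τ hτm hdτ]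
    have h2 : η ((d^k) y) = 0 := by
      rw [← mem_mIdeal]
      have := hiter k 1 y (by rwa [show 1+k = k+1 by ring])
      rwa [pow_one] at this
    have hfac : (k.factorial : ℝ) ≠ 0 := Nat.cast_ne_zero.mpr k.factorial_ne_zero
    have ha : η a = 0 := by
      rw [h1, h2, add_zero] at h0
      exact (mul_eq_zero.mp h0).resolve_left hfac
    rw [hxd]
    refine add_mem ?_ hy
    have : τ^k * a ∈ (mIdeal η)^k * mIdeal η :=
      Ideal.mul_mem_mul (Ideal.pow_mem_pow hτm k) (mem_mIdeal.mpr ha)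
    rwa [← pow_succ] at this
end aux2
lemma nakayama_tau (η : A →ₐ[ℝ] ℝ) (τ : A)
    (hFG : (mIdeal η).FG)
    (hdec : ∀ x ∈ mIdeal η, ∃ c z, z ∈ (mIdeal η)^2 ∧ x = c * τ + z) :
    ∃ r : A, η r = 1 ∧ ∀ j : ℕ, ∀ x ∈ (mIdeal η)^j, ∃ w, r^j * x = τ^j * w := by
  set m : Ideal A := mIdeal η with hm
  set I : Ideal A := Ideal.span {τ} with hI
  let Q := A ⧸ I
  let π : A →ₗ[A] Q := I.mkQ
  set N : Submodule A Q := Submodule.map π (m : Submodule A A) with hN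
  have hNFG : N.FG := Submodule.FG.map π hFG
  have hle : N ≤ m • N := by
    rintro nn ⟨x, hx, rfl⟩
    obtain ⟨c, z, hz, hxz⟩ := hdec x hx
    have h1 : π x = π z := by
      rw [hxz, map_add]
      have : π (c * τ) = 0 := by
        rw [Submodule.mkQ_apply, Submodule.Quotient.mk_eq_zero]
        exact Ideal.mul_mem_left _ _ (Ideal.mem_span_singleton_self τ)
      rw [this, zero_add]
    rw [h1]
    have h2 : π z ∈ Submodule.map π ((m^2 : Ideal A) : Submodule A A) := ⟨z, hz, rfl⟩
    have h3 : Submodule.map π ((m^2 : Ideal A) : Submodule A A) = m • N := by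
      rw [pow_two, ← Ideal.smul_eq_mul, Submodule.map_smul'']
    rwa [h3] at h2
  obtain ⟨r, hr1, hr0⟩ :=
    Submodule.exists_sub_one_mem_and_smul_eq_zero_of_fg_of_le_smul m N hNFG hle
  have hηr : η r = 1 := by
    have : η (r - 1) = 0 := mem_mIdeal.mp hr1
    rw [map_sub, map_one, sub_eq_zero] at this
    exact this
  refine ⟨r, hηr, ?_⟩
  have habs : ∀ x ∈ m, r * x ∈ I := by
    intro x hx
    have : r • π x = 0 := hr0 (π x) ⟨x, hx, rfl⟩
    rw [← map_smul, smul_eq_mul, Submodule.mkQ_apply, Submodule.Quotient.mk_eq_zero] at this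
    exact this
  intro j
  induction j with
  | zero =>
    intro x _
    exact ⟨x, by ring⟩
  | succ j ih =>
    intro x hx
    rw [pow_succ] at hx
    refine Submodule.mul_induction_on hx ?_ ?_
    · intro u hu v hv
      obtain ⟨w, hw⟩ := ih u hu
      obtain ⟨w', hw'⟩ := Ideal.mem_span_singleton'.mp (habs v hv)
      refine ⟨w * w', ?_⟩
      have : r^(j+1) * (u * v) = (r^j * u) * (r * v) := by ring
      rw [this, hw, ← hw']
      ring
    · intro u v hu hv
      obtain ⟨w, hw⟩ := hu
      obtain ⟨w', hw'⟩ := hv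
      exact ⟨w + w', by rw [mul_add, hw, hw', mul_add]⟩
lemma mIdeal_ne_top (η : A →ₐ[ℝ] ℝ) : mIdeal η ≠ ⊤ := by
  intro h
  have : (1:A) ∈ mIdeal η := h ▸ Submodule.mem_top
  rw [mem_mIdeal, map_one] at this
  exact one_ne_zero this

lemma mIdeal_inj {η η' : A →ₐ[ℝ] ℝ} (h : mIdeal η = mIdeal η') : η = η' := by
  ext x
  have h1 : x - algebraMap ℝ A (η x) ∈ mIdeal η := by
    rw [mem_mIdeal, map_sub, AlgHom.commutes]; simp
  rw [h, mem_mIdeal, map_sub, AlgHom.commutes] at h1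
  simp only [sub_eq_zero] at h1
  exact h1.symm

lemma exists_ord [IsNoetherianRing A] [IsDomain A] (η : A →ₐ[ℝ] ℝ)
    {x : A} (hx : x ≠ 0) : ∃ k, x ∈ (mIdeal η)^k ∧ x ∉ (mIdeal η)^(k+1) := by
  by_contra hcon
  push_neg at hcon
  have hall : ∀ k, x ∈ (mIdeal η)^k := by
    intro k
    induction k with
    | zero => simp
    | succ k ih => exact hcon k ih
  have hbot := Ideal.iInf_pow_eq_bot_of_isDomain (mIdeal η) (mIdeal_ne_top η)
  have : x ∈ (⊥ : Ideal A) := hbot ▸ Ideal.mem_iInf.mpr hall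
  exact hx (Ideal.mem_bot.mp this)

lemma finite_zeros [IsNoetherianRing A] [IsDomain A]
    (hdim : ringKrullDim A = 1) (τ : A) (hτ : τ ≠ 0) :
    {ζ : A →ₐ[ℝ] ℝ | ζ τ = 0}.Finite := by
  have hker_prime : ∀ ζ : A →ₐ[ℝ] ℝ, (mIdeal ζ).IsPrime := fun ζ =>
    RingHom.ker_isPrime _
  have hmin : ∀ ζ ∈ {ζ : A →ₐ[ℝ] ℝ | ζ τ = 0},
      mIdeal ζ ∈ (Ideal.span {τ}).minimalPrimes := by
    intro ζ hζ
    refine ⟨⟨hker_prime ζ, ?_⟩, ?_⟩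
    · rw [Ideal.span_le, Set.singleton_subset_iff]
      exact mem_mIdeal.mpr hζ
    · rintro p ⟨hp, hτp⟩ hple
      by_contra hne
      have hlt : p < mIdeal ζ := lt_of_le_of_ne hple (fun h => hne (le_of_eq h.symm) )
      have hbotp : (⊥ : Ideal A) < p := by
        rcases eq_bot_or_bot_lt p with h | h
        · exfalso
          have : τ ∈ p := hτp (Ideal.mem_span_singleton_self τ)
          rw [h, Ideal.mem_bot] at this
          exact hτ this
        · exact h
      -- build a chain of primes of length 2
      have hbot_prime : (⊥ : Ideal A).IsPrime := Ideal.bot_prime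
      let p0 : PrimeSpectrum A := ⟨⊥, hbot_prime⟩
      let p1 : PrimeSpectrum A := ⟨p, hp⟩
      let p2 : PrimeSpectrum A := ⟨mIdeal ζ, hker_prime ζ⟩
      have hchain : List.Chain' (· < ·) [p0, p1, p2] := by
        refine List.isChain_cons_cons.mpr ⟨?_, List.isChain_cons_cons.mpr ⟨?_, List.isChain_singleton _⟩⟩
        · exact hbotp
        · exact hlt
      let c : LTSeries (PrimeSpectrum A) :=
        RelSeries.fromListIsChain [p0, p1, p2] (by simp) hchain
      have hlen : c.length = 2 := rfl
      have hle := Order.LTSeries.length_le_krullDim c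
      rw [hlen] at hle
      rw [show Order.krullDim (PrimeSpectrum A) = ringKrullDim A from rfl, hdim] at hle
      norm_num at hle
  have hfin : ((Ideal.span {τ}).minimalPrimes).Finite := by
    rw [Ideal.minimalPrimes_eq_comap]
    exact Set.Finite.image _ (minimalPrimes.finite_of_isNoetherianRing _)
  refine Set.Finite.of_finite_image (f := fun ζ => mIdeal ζ) (hfin.subset ?_) ?_
  · rintro _ ⟨ζ, hζ, rfl⟩
    exact hmin ζ hζ
  · intro a _ b _ h
    exact mIdeal_inj h

lemma numericB (η₀ : A →ₐ[ℝ] ℝ) (S : Set (A →ₐ[ℝ] ℝ))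
    (hacc : (η₀ : A → ℝ) ∈
      closure ((((fun η : A →ₐ[ℝ] ℝ => (η : A → ℝ)) '' S)) \ {(η₀ : A → ℝ)}))
    (τ : A) (hτ0 : η₀ τ = 0)
    (hfinB : {ζ : A →ₐ[ℝ] ℝ | ζ τ = 0}.Finite)
    (p f q₁ wf s : A) (k : ℕ)
    (hsp : s * p = τ^k * q₁) (hsf : s * f = τ^(k+1) * wf)
    (hq1ne : η₀ q₁ ≠ 0)
    (hp : ∀ η ∈ S, 0 ≤ η p) (hpf : ∀ η ∈ S, η p ≤ η f) : False := by
  classical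
  set x₀ : A → ℝ := (η₀ : A → ℝ) with hx₀
  set ε : ℝ := |η₀ q₁| / (2 * (|η₀ wf| + 1)) with hε
  have hq1pos : 0 < |η₀ q₁| := abs_pos.mpr hq1ne
  have hwfpos : 0 < |η₀ wf| + 1 := by positivity
  have hεpos : 0 < ε := by positivity
  set bad : Set (A → ℝ) := (fun η : A →ₐ[ℝ] ℝ => (η : A → ℝ)) '' ({ζ | ζ τ = 0} \ {η₀})
    with hbad
  have hbadfin : bad.Finite := (hfinB.diff).image _
  have hbadclosed : IsClosed bad := hbadfin.isClosed
  set O : Set (A → ℝ) :=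
    {x | |x q₁ - η₀ q₁| < |η₀ q₁|/2} ∩ {x | |x τ| < ε} ∩
      {x | |x wf - η₀ wf| < 1} ∩ badᶜ with hO
  have hOopen : IsOpen O := by
    refine IsOpen.inter (IsOpen.inter (IsOpen.inter ?_ ?_) ?_) hbadclosed.isOpen_compl
    · exact isOpen_lt (((continuous_apply q₁).sub continuous_const).abs) continuous_const
    · exact isOpen_lt ((continuous_apply τ).abs) continuous_const
    · exact isOpen_lt (((continuous_apply wf).sub continuous_const).abs) continuous_const
  have hx₀O : x₀ ∈ O := by
    refine ⟨⟨⟨?_, ?_⟩, ?_⟩, ?_⟩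
    · show |η₀ q₁ - η₀ q₁| < |η₀ q₁|/2
      rw [sub_self, abs_zero]; linarith
    · show |η₀ τ| < ε
      have h0 : |η₀ τ| = 0 := by rw [show η₀ τ = x₀ τ from rfl, hτ0, abs_zero]
      rw [h0]; exact hεpos
    · show |η₀ wf - η₀ wf| < 1
      rw [sub_self, abs_zero]; exact one_pos
    · rintro ⟨ζ, ⟨hζτ, hζne⟩, hζeq⟩
      exact hζne (DFunLike.coe_injective hζeq)
  obtain ⟨x, hxO, hxK⟩ := _root_.mem_closure_iff.mp hacc O hOopen hx₀O
  obtain ⟨⟨η, hηS, rfl⟩, hxne⟩ := hxK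
  have hηne : η ≠ η₀ := fun h => hxne (by rw [h]; rfl)
  have hητ : η τ ≠ 0 := by
    intro h0
    exact hxO.2 ⟨η, ⟨h0, hηne⟩, rfl⟩
  obtain ⟨⟨⟨hq1b, hτb⟩, hwfb⟩, -⟩ := hxO
  simp only [Set.mem_setOf_eq] at hq1b hτb hwfb
  -- numeric contradiction
  have e1 : |η s| * η p = |η τ|^k * |η q₁| := by
    have := congrArg η hsp
    rw [map_mul, map_mul, map_pow] at this
    have h := congrArg (|·|) this
    simpa [abs_mul, abs_pow, abs_of_nonneg (hp η hηS)] using h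
  have e2 : |η s| * η f = |η τ|^(k+1) * |η wf| := by
    have := congrArg η hsf
    rw [map_mul, map_mul, map_pow] at this
    have h := congrArg (|·|) this
    have hf0 : 0 ≤ η f := le_trans (hp η hηS) (hpf η hηS)
    simpa [abs_mul, abs_pow, abs_of_nonneg hf0] using h
  have e3 : |η τ|^k * |η q₁| ≤ |η τ|^(k+1) * |η wf| := by
    rw [← e1, ← e2]
    exact mul_le_mul_of_nonneg_left (hpf η hηS) (abs_nonneg _)
  have hτpos : 0 < |η τ| := abs_pos.mpr hητ
  have e4 : |η q₁| ≤ |η τ| * |η wf| := by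
    have hpk : 0 < |η τ|^k := pow_pos hτpos k
    rw [pow_succ, mul_assoc] at e3
    exact le_of_mul_le_mul_left e3 hpk
  have e5 : |η q₁| ≥ |η₀ q₁|/2 := by
    have h := abs_sub_abs_le_abs_sub (η₀ q₁) (η q₁)
    rw [abs_sub_comm] at h
    linarith
  have e6 : |η wf| < |η₀ wf| + 1 := by
    have h := abs_sub_abs_le_abs_sub (η wf) (η₀ wf)
    linarith
  have e7 : |η τ| * |η wf| < ε * (|η₀ wf| + 1) := by
    calc |η τ| * |η wf| ≤ |η τ| * (|η₀ wf| + 1) :=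
          mul_le_mul_of_nonneg_left (le_of_lt e6) (abs_nonneg _)
    _ < ε * (|η₀ wf| + 1) := by
          exact mul_lt_mul_of_pos_right hτb hwfpos
  have e8 : ε * (|η₀ wf| + 1) = |η₀ q₁|/2 := by
    rw [hε]
    field_simp
  linarith

lemma localA_pos (η₀ : A →ₐ[ℝ] ℝ) (S : Set (A →ₐ[ℝ] ℝ)) (f g : A)
    (hfpos : 0 < η₀ f) :
    ∃ U : Set (A → ℝ), IsOpen U ∧ (η₀ : A → ℝ) ∈ U ∧
      ∃ C, 0 ≤ C ∧ ∀ η ∈ S, (η : A → ℝ) ∈ U → |η g| ≤ C * η f := by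
  refine ⟨{x | x f > η₀ f / 2} ∩ {x | |x g| < |η₀ g| + 1},
    IsOpen.inter (isOpen_lt continuous_const (continuous_apply f))
      (isOpen_lt ((continuous_apply g).abs) continuous_const),
    ⟨show η₀ f > η₀ f / 2 by linarith, show |η₀ g| < |η₀ g| + 1 by linarith⟩,
    (|η₀ g| + 1) / (η₀ f / 2), by positivity, ?_⟩
  rintro η hη ⟨h1, h2⟩
  simp only [Set.mem_setOf_eq] at h1 h2
  have hfp2 : (0:ℝ) < η₀ f / 2 := by linarith
  rw [div_mul_eq_mul_div, le_div_iff₀ hfp2]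
  nlinarith [abs_nonneg (η g)]

lemma localA_zero (η₀ : A →ₐ[ℝ] ℝ) (S : Set (A →ₐ[ℝ] ℝ)) (f g : A)
    (hf0 : ∀ η ∈ S, 0 ≤ η f)
    (τ qf qg s : A) (k : ℕ) (hk : 1 ≤ k)
    (hsf : s * f = τ^k * qf) (hsg : s * g = τ^k * qg)
    (hqfne : η₀ qf ≠ 0) (hs : η₀ s = 1) :
    ∃ U : Set (A → ℝ), IsOpen U ∧ (η₀ : A → ℝ) ∈ U ∧
      ∃ C, 0 ≤ C ∧ ∀ η ∈ S, (η : A → ℝ) ∈ U → |η g| ≤ C * η f := by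
  set c1 : ℝ := |η₀ qf| with hc1def
  set c2 : ℝ := |η₀ qg| + 1 with hc2def
  have hc1 : 0 < c1 := abs_pos.mpr hqfne
  have hc2 : 0 < c2 := by positivity
  refine ⟨{x | |x qf| > c1 / 2} ∩ ({x | 1/2 < |x s|} ∩ {x | |x s| < 2}) ∩
      {x | |x qg| < c2},
    ?_, ?_, 8 * c2 / c1, by positivity, ?_⟩
  · refine IsOpen.inter (IsOpen.inter ?_ (IsOpen.inter ?_ ?_)) ?_
    · exact isOpen_lt continuous_const ((continuous_apply qf).abs)
    · exact isOpen_lt continuous_const ((continuous_apply s).abs)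
    · exact isOpen_lt ((continuous_apply s).abs) continuous_const
    · exact isOpen_lt ((continuous_apply qg).abs) continuous_const
  · refine ⟨⟨?_, ?_, ?_⟩, ?_⟩
    · show |η₀ qf| > c1/2; rw [← hc1def]; linarith
    · show (1:ℝ)/2 < |η₀ s|; rw [hs]; norm_num
    · show |η₀ s| < 2; rw [hs]; norm_num
    · show |η₀ qg| < c2; rw [hc2def]; linarith
  · rintro η hη ⟨⟨hqfb, hsb1, hsb2⟩, hqgb⟩
    simp only [Set.mem_setOf_eq] at hqfb hsb1 hsb2 hqgb
    have hηf0 : 0 ≤ η f := hf0 η hη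
    have e1 : |η s| * η f = |η τ|^k * |η qf| := by
      have h := congrArg η hsf
      rw [map_mul, map_mul, map_pow] at h
      have h2 := congrArg (|·|) h
      simpa [abs_mul, abs_pow, abs_of_nonneg hηf0] using h2
    have e2 : |η s| * |η g| = |η τ|^k * |η qg| := by
      have h := congrArg η hsg
      rw [map_mul, map_mul, map_pow] at h
      have h2 := congrArg (|·|) h
      simpa [abs_mul, abs_pow] using h2
    by_cases hτ : η τ = 0
    · have hT : |η τ|^k = 0 := by
        rw [hτ, abs_zero]
        exact zero_pow (by omega)
      have hsne : |η s| ≠ 0 := by positivity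
      have hf : η f = 0 := by
        have := e1; rw [hT, zero_mul] at this
        exact (mul_eq_zero.mp this).resolve_left hsne
      have hg : |η g| = 0 := by
        have := e2; rw [hT, zero_mul] at this
        exact (mul_eq_zero.mp this).resolve_left hsne
      rw [hf, hg, mul_zero]
    · set T : ℝ := |η τ|^k with hT
      have hTpos : 0 < T := pow_pos (abs_pos.mpr hτ) k
      have b1 : |η g| ≤ 2 * T * c2 := by
        have h1 : |η g| ≤ 2 * (|η s| * |η g|) := by
          nlinarith [abs_nonneg (η g)]
        rw [e2] at h1
        nlinarith [abs_nonneg (η g)]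
      have b2 : T * c1 ≤ 4 * η f := by
        have h1 : T * (c1/2) ≤ T * |η qf| := by
          exact mul_le_mul_of_nonneg_left (le_of_lt hqfb) hTpos.le
        rw [← e1] at h1
        nlinarith
      rw [div_mul_eq_mul_div, le_div_iff₀ hc1]
      nlinarith [mul_le_mul_of_nonneg_right b1 hc1.le, mul_le_mul_of_nonneg_left b2 hc2.le]

lemma globalA (S : Set (A →ₐ[ℝ] ℝ))
    (hScpt : IsCompact ((fun η : A →ₐ[ℝ] ℝ => (η : A → ℝ)) '' S))
    (f g : A) (hf0 : ∀ η ∈ S, 0 ≤ η f)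
    (hloc : ∀ η₀ ∈ S, ∃ U : Set (A → ℝ), IsOpen U ∧ (η₀ : A → ℝ) ∈ U ∧
      ∃ C, 0 ≤ C ∧ ∀ η ∈ S, (η : A → ℝ) ∈ U → |η g| ≤ C * η f) :
    ∃ C, 0 < C ∧ ∀ η ∈ S, |η g| ≤ C * η f := by
  classical
  set K := (fun η : A →ₐ[ℝ] ℝ => (η : A → ℝ)) '' S with hK
  have h : ∀ i : K, ∃ U : Set (A → ℝ), IsOpen U ∧ (i : A → ℝ) ∈ U ∧
      ∃ C, 0 ≤ C ∧ ∀ η ∈ S, (η : A → ℝ) ∈ U → |η g| ≤ C * η f := by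
    rintro ⟨x, hx⟩
    obtain ⟨η₀, hη₀, rfl⟩ := hx
    exact hloc η₀ hη₀
  choose U hUo hUm C hC0 hCb using h
  have hcov : K ⊆ ⋃ i : K, U i := fun x hx =>
    Set.mem_iUnion.mpr ⟨⟨x, hx⟩, hUm ⟨x, hx⟩⟩
  obtain ⟨T, hT⟩ := hScpt.elim_finite_subcover U hUo hcov
  set Cm : ℝ := 1 + ∑ i ∈ T, C i with hCm
  have hCmpos : 0 < Cm := by
    have : (0:ℝ) ≤ ∑ i ∈ T, C i := Finset.sum_nonneg (fun i _ => hC0 i)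
    linarith
  refine ⟨Cm, hCmpos, ?_⟩
  intro η hη
  have hmem : (η : A → ℝ) ∈ K := ⟨η, hη, rfl⟩
  obtain ⟨i, hiT, hiU⟩ := Set.mem_iUnion₂.mp (hT hmem)
  have hb := hCb i η hη hiU
  have hCi : C i ≤ Cm := by
    have h1 : C i ≤ ∑ j ∈ T, C j := Finset.single_le_sum (fun j _ => hC0 j) hiT
    linarith
  calc |η g| ≤ C i * η f := hb
  _ ≤ Cm * η f := mul_le_mul_of_nonneg_right hCi (hf0 η hη)
end aux

/-- Let `C` be an irreducible non-singular affine curve over `ℝ`, `S ⊆ C(ℝ)`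
compact without isolated points, `V ⊆ ℝ[C]` of dimension `n+1`, and
`P = {f ∈ V : f|_S ≥ 0}`.  For `0 ≠ f ∈ P`, the linear span of the
supporting face `F_f = {p ∈ P : f - p ∈ P}` equals
`V_f = {g ∈ V : ord_η(g) ≥ ord_η(f) for all η ∈ S}`. -/
theorem stmt18 (A : Type) [CommRing A] [IsDomain A] [Algebra ℝ A]
    [Algebra.FiniteType ℝ A] [Algebra.Smooth ℝ A]
    (hdim : ringKrullDim A = 1)
    (t : A)
    (hfree : ∀ ω : Ω[A⁄ℝ], ∃! c : A, ω = c • KaehlerDifferential.D ℝ A t)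
    (d : Module.End ℝ A)
    (hd : ∀ g : A, KaehlerDifferential.D ℝ A g =
      d g • KaehlerDifferential.D ℝ A t)
    (S : Set (A →ₐ[ℝ] ℝ))
    (hScpt : IsCompact ((fun η : A →ₐ[ℝ] ℝ => (η : A → ℝ)) '' S))
    (hSnoiso : ∀ x ∈ (fun η : A →ₐ[ℝ] ℝ => (η : A → ℝ)) '' S,
      x ∈ closure (((fun η : A →ₐ[ℝ] ℝ => (η : A → ℝ)) '' S) \ {x}))
    (hSne : S.Nonempty)
    (n : ℕ) (V : Submodule ℝ A) (hV : Module.finrank ℝ V = n + 1)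
    (P : Set A) (hP : P = {g : A | g ∈ V ∧ ∀ η ∈ S, 0 ≤ η g})
    (f : A) (hf : f ∈ P) (hf0 : f ≠ 0) :
    Submodule.span ℝ {p : A | p ∈ P ∧ f - p ∈ P} =
      Submodule.span ℝ {g : A | g ∈ V ∧
        ∀ η ∈ S, ∀ m : ℕ, ordGe d f η m → ordGe d g η m} := by
  classical
  haveI : IsNoetherianRing A := Algebra.FiniteType.isNoetherianRing ℝ A
  have hmul : ∀ x y : A, d (x * y) = x * d y + y * d x := d_mul t hfree d hd
  have hdt : d t = 1 := d_t t hfree d hd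
  have hdc : ∀ r : ℝ, d (algebraMap ℝ A r) = 0 := d_algebraMap t hfree d hd
  have hfS : ∀ η ∈ S, 0 ≤ η f := by rw [hP] at hf; exact hf.2
  have hfV : f ∈ V := by rw [hP] at hf; exact hf.1
  have hτm : ∀ η : A →ₐ[ℝ] ℝ, (t - algebraMap ℝ A (η t)) ∈ mIdeal η :=
    fun η => sub_const_mem t
  have hdτ : ∀ η : A →ₐ[ℝ] ℝ, d (t - algebraMap ℝ A (η t)) = 1 := by
    intro η; rw [map_sub, hdt, hdc, sub_zero]
  have hτne : ∀ η : A →ₐ[ℝ] ℝ, (t - algebraMap ℝ A (η t)) ≠ 0 := by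
    intro η h
    have h2 := hdτ η
    rw [h, map_zero] at h2
    exact one_ne_zero h2.symm
  have hiter : ∀ η : A →ₐ[ℝ] ℝ, ∀ s k : ℕ, ∀ x ∈ (mIdeal η)^(k+s),
      (d^s) x ∈ (mIdeal η)^k := fun η => d_iter_mem_pow d hmul η
  have hk1 : ∀ η : A →ₐ[ℝ] ℝ, ∀ x ∈ mIdeal η,
      x - algebraMap ℝ A (η (d x)) * (t - algebraMap ℝ A (η t)) ∈ (mIdeal η)^2 :=
    fun η x hx => key1 t hfree d hd η x hx
  have hmem_of_ord : ∀ (η : A →ₐ[ℝ] ℝ) (k : ℕ) (x : A),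
      ordGe d x η k → x ∈ (mIdeal η)^k :=
    fun η k x h => mem_pow_of_ordGe d η hmul (hiter η) _ (hτm η) (hdτ η) (hk1 η) k x h
  have hord_of_mem : ∀ (η : A →ₐ[ℝ] ℝ) (k : ℕ) (x : A),
      x ∈ (mIdeal η)^k → ordGe d x η k :=
    fun η k x h => ordGe_of_mem_pow d η hmul (hiter η) _ (hτm η) (hdτ η) h
  have hnak : ∀ η : A →ₐ[ℝ] ℝ, ∃ r : A, η r = 1 ∧
      ∀ j : ℕ, ∀ x ∈ (mIdeal η)^j, ∃ w, r^j * x = (t - algebraMap ℝ A (η t))^j * w := by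
    intro η
    refine nakayama_tau η _ (IsNoetherian.noetherian _) ?_
    intro x hx
    exact ⟨algebraMap ℝ A (η (d x)),
      x - algebraMap ℝ A (η (d x)) * (t - algebraMap ℝ A (η t)),
      hk1 η x hx, by ring⟩
  choose r hr1 hrabs using hnak
  apply le_antisymm
  · apply Submodule.span_mono
    rintro p ⟨hpP, hfp⟩
    have hpV : p ∈ V := by rw [hP] at hpP; exact hpP.1
    have hpPos : ∀ η ∈ S, 0 ≤ η p := by rw [hP] at hpP; exact hpP.2
    have hple : ∀ η ∈ S, η p ≤ η f := by
      rw [hP] at hfp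
      intro η hη
      have h := hfp.2 η hη
      rw [map_sub] at h
      linarith
    refine ⟨hpV, ?_⟩
    intro η hη m hordf
    apply hord_of_mem η m p
    have hfm : f ∈ (mIdeal η)^m := hmem_of_ord η m f hordf
    by_cases hp0 : p = 0
    · rw [hp0]; exact zero_mem _
    obtain ⟨k, hpk, hpk1⟩ := exists_ord η hp0
    by_cases hkm : m ≤ k
    · exact Ideal.pow_le_pow_right hkm hpk
    push_neg at hkm
    exfalso
    obtain ⟨b, z, hz, hpd⟩ :=
      mem_pow_decomp d η hmul (hiter η) _ (hτm η) (hdτ η) (hk1 η) k p hpk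
    have hbne : η b ≠ 0 := by
      intro hb0
      apply hpk1
      rw [hpd]
      refine add_mem ?_ hz
      have h : (t - algebraMap ℝ A (η t))^k * b ∈ (mIdeal η)^k * mIdeal η :=
        Ideal.mul_mem_mul (Ideal.pow_mem_pow (hτm η) k) (mem_mIdeal.mpr hb0)
      rwa [← pow_succ] at h
    obtain ⟨wz, hwz⟩ := hrabs η (k+1) z hz
    have hfk1 : f ∈ (mIdeal η)^(k+1) := Ideal.pow_le_pow_right (by omega) hfm
    obtain ⟨wf, hwf⟩ := hrabs η (k+1) f hfk1
    have hsp : (r η)^(k+1) * p = (t - algebraMap ℝ A (η t))^k *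
        ((r η)^(k+1) * b + (t - algebraMap ℝ A (η t)) * wz) := by
      rw [hpd]
      linear_combination hwz
    have hτ0 : η (t - algebraMap ℝ A (η t)) = 0 := mem_mIdeal.mp (hτm η)
    have hq1 : η ((r η)^(k+1) * b + (t - algebraMap ℝ A (η t)) * wz) ≠ 0 := by
      rw [map_add, map_mul, map_mul, map_pow, hr1 η, one_pow, one_mul, hτ0, zero_mul,
        add_zero]
      exact hbne
    exact numericB η S (hSnoiso _ ⟨η, hη, rfl⟩) _ hτ0
      (finite_zeros hdim _ (hτne η)) p f _ wf ((r η)^(k+1)) k hsp hwf hq1 hpPos hple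
  · rw [Submodule.span_le]
    rintro g ⟨hgV, hgord⟩
    have hloc : ∀ η₀ ∈ S, ∃ U : Set (A → ℝ), IsOpen U ∧ (η₀ : A → ℝ) ∈ U ∧
        ∃ C, 0 ≤ C ∧ ∀ η ∈ S, (η : A → ℝ) ∈ U → |η g| ≤ C * η f := by
      intro η₀ hη₀
      by_cases hf00 : η₀ f = 0
      · obtain ⟨k, hfk, hfk1⟩ := exists_ord η₀ hf0
        have hkge : 1 ≤ k := by
          rcases Nat.eq_zero_or_pos k with h0 | h1
          · exfalso
            apply hfk1
            rw [h0, zero_add, pow_one]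
            exact mem_mIdeal.mpr hf00
          · exact h1
        obtain ⟨a, y, hy, hfd⟩ :=
          mem_pow_decomp d η₀ hmul (hiter η₀) _ (hτm η₀) (hdτ η₀) (hk1 η₀) k f hfk
        have hane : η₀ a ≠ 0 := by
          intro ha0
          apply hfk1
          rw [hfd]
          refine add_mem ?_ hy
          have h : (t - algebraMap ℝ A (η₀ t))^k * a ∈ (mIdeal η₀)^k * mIdeal η₀ :=
            Ideal.mul_mem_mul (Ideal.pow_mem_pow (hτm η₀) k) (mem_mIdeal.mpr ha0)
          rwa [← pow_succ] at h
        have hgk : g ∈ (mIdeal η₀)^k :=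
          hmem_of_ord η₀ k g (hgord η₀ hη₀ k (hord_of_mem η₀ k f hfk))
        obtain ⟨b, z, hz, hgd⟩ :=
          mem_pow_decomp d η₀ hmul (hiter η₀) _ (hτm η₀) (hdτ η₀) (hk1 η₀) k g hgk
        obtain ⟨wy, hwy⟩ := hrabs η₀ (k+1) y hy
        obtain ⟨wz, hwz⟩ := hrabs η₀ (k+1) z hz
        have hτ0 : η₀ (t - algebraMap ℝ A (η₀ t)) = 0 := mem_mIdeal.mp (hτm η₀)
        have hs0 : η₀ ((r η₀)^(k+1)) = 1 := by rw [map_pow, hr1 η₀, one_pow]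
        have hsf : (r η₀)^(k+1) * f = (t - algebraMap ℝ A (η₀ t))^k *
            ((r η₀)^(k+1) * a + (t - algebraMap ℝ A (η₀ t)) * wy) := by
          rw [hfd]
          linear_combination hwy
        have hsg : (r η₀)^(k+1) * g = (t - algebraMap ℝ A (η₀ t))^k *
            ((r η₀)^(k+1) * b + (t - algebraMap ℝ A (η₀ t)) * wz) := by
          rw [hgd]
          linear_combination hwz
        have hqfne : η₀ ((r η₀)^(k+1) * a + (t - algebraMap ℝ A (η₀ t)) * wy) ≠ 0 := by
          rw [map_add, map_mul, map_mul, hs0, one_mul, hτ0, zero_mul, add_zero]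
          exact hane
        exact localA_zero η₀ S f g hfS _ _ _ _ k hkge hsf hsg hqfne hs0
      · exact localA_pos η₀ S f g (lt_of_le_of_ne (hfS η₀ hη₀) (Ne.symm hf00))
    obtain ⟨C, hCpos, hCb⟩ := globalA S hScpt f g hfS hloc
    have hC0 : (C:ℝ) ≠ 0 := ne_of_gt hCpos
    set p₁ : A := (2⁻¹ : ℝ) • (f + C⁻¹ • g) with hp₁
    set p₂ : A := (2⁻¹ : ℝ) • (f - C⁻¹ • g) with hp₂
    have hval : ∀ η : A →ₐ[ℝ] ℝ, η ∈ S → 0 ≤ η p₁ ∧ 0 ≤ η p₂ := by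
      intro η hη
      have hb := hCb η hη
      have habs := abs_le.mp hb
      have h1 : η p₁ = 2⁻¹ * (η f + C⁻¹ * η g) := by
        rw [hp₁, map_smul, map_add, map_smul, smul_eq_mul, smul_eq_mul]
      have h2 : η p₂ = 2⁻¹ * (η f - C⁻¹ * η g) := by
        rw [hp₂, map_smul, map_sub, map_smul, smul_eq_mul, smul_eq_mul]
      have hCinv : (0:ℝ) < C⁻¹ := by positivity
      have hCC : C⁻¹ * C = 1 := inv_mul_cancel₀ hC0
      constructor
      · rw [h1]
        nlinarith [habs.1, mul_le_mul_of_nonneg_left (neg_le_of_neg_le (by linarith [habs.1] : -(C * η f) ≤ η g)) hCinv.le]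
      · rw [h2]
        nlinarith [habs.2, mul_le_mul_of_nonneg_left habs.2 hCinv.le]
    have hp₁V : p₁ ∈ V :=
      Submodule.smul_mem _ _ (Submodule.add_mem _ hfV (Submodule.smul_mem _ _ hgV))
    have hp₂V : p₂ ∈ V :=
      Submodule.smul_mem _ _ (Submodule.sub_mem _ hfV (Submodule.smul_mem _ _ hgV))
    have hsum : p₁ + p₂ = f := by
      rw [hp₁, hp₂, ← smul_add]
      have h : (f + C⁻¹ • g) + (f - C⁻¹ • g) = (2:ℝ) • f := by
        rw [two_smul]; abel
      rw [h, smul_smul]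
      norm_num
    have hfp₁ : f - p₁ = p₂ := by rw [← hsum]; abel
    have hfp₂ : f - p₂ = p₁ := by rw [← hsum]; abel
    have hsub : p₁ - p₂ = C⁻¹ • g := by
      rw [hp₁, hp₂, ← smul_sub]
      have h : (f + C⁻¹ • g) - (f - C⁻¹ • g) = (2:ℝ) • (C⁻¹ • g) := by
        rw [two_smul]; abel
      rw [h, smul_smul]
      norm_num
    have hF1 : p₁ ∈ {p : A | p ∈ P ∧ f - p ∈ P} := by
      refine ⟨?_, ?_⟩
      · rw [hP]; exact ⟨hp₁V, fun η hη => (hval η hη).1⟩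
      · rw [hfp₁, hP]; exact ⟨hp₂V, fun η hη => (hval η hη).2⟩
    have hF2 : p₂ ∈ {p : A | p ∈ P ∧ f - p ∈ P} := by
      refine ⟨?_, ?_⟩
      · rw [hP]; exact ⟨hp₂V, fun η hη => (hval η hη).2⟩
      · rw [hfp₂, hP]; exact ⟨hp₁V, fun η hη => (hval η hη).1⟩
    have hgeq : g = C • p₁ - C • p₂ := by
      rw [← smul_sub, hsub, smul_smul, mul_inv_cancel₀ hC0, one_smul]
    have : g ∈ Submodule.span ℝ {p : A | p ∈ P ∧ f - p ∈ P} := by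
      rw [hgeq]
      exact Submodule.sub_mem _
        (Submodule.smul_mem _ _ (Submodule.subset_span hF1))
        (Submodule.smul_mem _ _ (Submodule.subset_span hF2))
    exact this
end

section
/- Let n = 2k be even and let K ⊂ ℝⁿ be the closed convex hull of the rational normal curve {(t, t², ..., tⁿ) : t ∈ ℝ}. Then K is exactly the set of x ∈ ℝⁿ for which the (k+1)×(k+1) Hankel matrix H(x) with entries H(x)_{ij} = x_{i+j} (0 ≤ i, j ≤ k, with x_0 := 1) is positive semidefinite. -/
/-- The `(k+1)×(k+1)` Hankel matrix of `x ∈ ℝ^{2k}`, with entries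
`H(x)_{ij} = x_{i+j}` where `x_0 := 1`. -/
def hankelMatrix (k : ℕ) (x : Fin (2 * k) → ℝ) :
    Matrix (Fin (k + 1)) (Fin (k + 1)) ℝ :=
  Matrix.of fun i j =>
    if h : (i : ℕ) + (j : ℕ) = 0 then 1
    else x ⟨(i : ℕ) + (j : ℕ) - 1, by
      have hi := i.isLt; have hj := j.isLt; omega⟩

open Polynomial Finset Matrix

private noncomputable def xext (k : ℕ) (x : Fin (2 * k) → ℝ) : ℕ → ℝ := fun j =>
  if h : j = 0 then 1 else if h2 : j - 1 < 2 * k then x ⟨j - 1, h2⟩ else 0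

private lemma hankel_eq_xext (k : ℕ) (x : Fin (2 * k) → ℝ) (i j : Fin (k + 1)) :
    hankelMatrix k x i j = xext k x ((i : ℕ) + (j : ℕ)) := by
  have hi := i.isLt; have hj := j.isLt
  simp only [hankelMatrix, Matrix.of_apply, xext]
  split_ifs with h h2 h3
  · rfl
  · rfl
  · omega

private noncomputable def L (k : ℕ) (x : Fin (2 * k) → ℝ) (p : Polynomial ℝ) : ℝ :=
  ∑ j ∈ Finset.range (2 * k + 1), p.coeff j * xext k x j

private lemma L_monomial (k : ℕ) (x : Fin (2 * k) → ℝ) (m : ℕ) (hm : m ≤ 2 * k) (c : ℝ) :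
    L k x (monomial m c) = c * xext k x m := by
  simp only [L, coeff_monomial, ite_mul, zero_mul]
  rw [Finset.sum_ite_eq (Finset.range (2 * k + 1)) m (fun j => c * xext k x j)]
  simp [Nat.lt_succ_iff, hm]

private lemma L_add (k : ℕ) (x : Fin (2 * k) → ℝ) (p q : Polynomial ℝ) :
    L k x (p + q) = L k x p + L k x q := by
  simp [L, coeff_add, add_mul, Finset.sum_add_distrib]

private lemma L_finset_sum {ι : Type*} (k : ℕ) (x : Fin (2 * k) → ℝ) (s : Finset ι)
    (f : ι → Polynomial ℝ) : L k x (∑ i ∈ s, f i) = ∑ i ∈ s, L k x (f i) := by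
  simp only [L, finset_sum_coeff, Finset.sum_mul]
  rw [Finset.sum_comm]

private lemma L_list_sum (k : ℕ) (x : Fin (2 * k) → ℝ) (l : List (Polynomial ℝ)) :
    L k x l.sum = (l.map (L k x)).sum := by
  induction l with
  | nil => simp [L]
  | cons h t ih => simp [L_add, ih]

private lemma L_sq_nonneg (k : ℕ) (x : Fin (2 * k) → ℝ)
    (hx : (hankelMatrix k x).PosSemidef) (q : Polynomial ℝ) (hq : q.natDegree ≤ k) :
    0 ≤ L k x (q ^ 2) := by
  set v : Fin (k + 1) → ℝ := fun i => q.coeff i with hv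
  have hquad := hx.dotProduct_mulVec_nonneg v
  have hq2 : q ^ 2 = ∑ i ∈ Finset.range (k + 1), ∑ j ∈ Finset.range (k + 1),
      monomial (i + j) (q.coeff i * q.coeff j) := by
    conv_lhs => rw [sq, q.as_sum_range' (k + 1) (Nat.lt_succ_of_le hq)]
    rw [Finset.sum_mul_sum]
    congr 1; funext i; congr 1; funext j
    rw [monomial_mul_monomial]
  have hL : L k x (q ^ 2) = ∑ i ∈ Finset.range (k + 1), ∑ j ∈ Finset.range (k + 1),
      q.coeff i * q.coeff j * xext k x (i + j) := by
    rw [hq2, L_finset_sum]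
    refine Finset.sum_congr rfl (fun i hi => ?_)
    rw [L_finset_sum]
    refine Finset.sum_congr rfl (fun j hj => ?_)
    exact L_monomial k x (i + j) (by
      have h1 := Finset.mem_range.mp hi
      have h2 := Finset.mem_range.mp hj
      omega) _
  have hquad' : dotProduct (star v) ((hankelMatrix k x).mulVec v)
      = ∑ i : Fin (k + 1), ∑ j : Fin (k + 1),
        q.coeff (i : ℕ) * q.coeff (j : ℕ) * xext k x ((i : ℕ) + (j : ℕ)) := by
    simp only [dotProduct, Matrix.mulVec, hankel_eq_xext, star_trivial, Finset.mul_sum]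
    refine Finset.sum_congr rfl (fun i _ => Finset.sum_congr rfl (fun j _ => ?_))
    simp only [hv]; ring
  rw [hL]
  simp only [Finset.sum_range]
  rw [← hquad']
  exact hquad

private lemma list_map_mul_sum (a : Polynomial ℝ) (l : List (Polynomial ℝ)) :
    (l.map (fun q => a * q)).sum = a * l.sum := by
  induction l with
  | nil => simp
  | cons h t ih => simp [ih, mul_add]

private lemma sos_aux (n : ℕ) : ∀ p : Polynomial ℝ, p.natDegree ≤ 2 * n →
    (∀ t : ℝ, 0 ≤ p.eval t) →
    ∃ l : List (Polynomial ℝ), (∀ q ∈ l, q.natDegree ≤ n) ∧ p = (l.map (· ^ 2)).sum := by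
  induction n with
  | zero =>
    intro p hd hpos
    obtain ⟨c, rfl⟩ := Polynomial.natDegree_eq_zero.mp (Nat.le_zero.mp hd)
    have hc : 0 ≤ c := by simpa using hpos 0
    refine ⟨[C (Real.sqrt c)], by simp, ?_⟩
    simp [← C_pow, Real.sq_sqrt hc]
  | succ n ih =>
    intro p hd hpos
    by_cases h0 : p.natDegree = 0
    · obtain ⟨c, rfl⟩ := Polynomial.natDegree_eq_zero.mp h0
      have hc : 0 ≤ c := by simpa using hpos 0
      refine ⟨[C (Real.sqrt c)], by simp, ?_⟩
      simp [← C_pow, Real.sq_sqrt hc]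
    · -- p attains a global minimum
      obtain ⟨t₀, ht₀⟩ := p.exists_forall_norm_le
      have hmin : ∀ t : ℝ, p.eval t₀ ≤ p.eval t := by
        intro t
        have h1 := ht₀ t
        rw [Real.norm_eq_abs, Real.norm_eq_abs, abs_of_nonneg (hpos t₀),
          abs_of_nonneg (hpos t)] at h1
        exact h1
      set m := p.eval t₀ with hm
      set g := p - C m with hg
      have hgroot : g.eval t₀ = 0 := by rw [hg]; simp [hm]
      have hglocal : IsLocalMin (fun t : ℝ => p.eval t) t₀ :=
        IsMinOn.isLocalMin (isMinOn_univ_iff.mpr hmin) Filter.univ_mem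
      have hderiv : p.derivative.eval t₀ = 0 := by
        have := hglocal.deriv_eq_zero
        rwa [Polynomial.deriv] at this
      obtain ⟨r1, hr1⟩ := (Polynomial.dvd_iff_isRoot (p := g)).mpr hgroot
      have hr1root : r1.eval t₀ = 0 := by
        have hdg : g.derivative = r1 + (X - C t₀) * r1.derivative := by
          rw [hr1, derivative_mul]
          simp [mul_comm]
        have : g.derivative.eval t₀ = r1.eval t₀ := by rw [hdg]; simp
        rw [hg, derivative_sub, derivative_C, sub_zero] at this
        rw [← this, hderiv]
      obtain ⟨r, hr⟩ := (Polynomial.dvd_iff_isRoot (p := r1)).mpr hr1root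
      have hgr : g = (X - C t₀) ^ 2 * r := by rw [hr1, hr]; ring
      -- r is nonneg away from t₀
      have hrpos' : ∀ t : ℝ, t ≠ t₀ → 0 ≤ r.eval t := by
        intro t ht
        have h1 : g.eval t = (t - t₀) ^ 2 * r.eval t := by rw [hgr]; simp
        have h2 : 0 ≤ g.eval t := by simp [hg]; exact hmin t
        have h3 : 0 < (t - t₀) ^ 2 := by have h4 : t - t₀ ≠ 0 := sub_ne_zero.mpr ht; positivity
        nlinarith [h2, h3, h1]
      have hrpos : ∀ t : ℝ, 0 ≤ r.eval t := by
        intro t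
        rcases eq_or_ne t t₀ with rfl | ht
        · by_contra hneg
          push_neg at hneg
          have hcont : ContinuousAt (fun s : ℝ => r.eval s) t :=
            r.continuous.continuousAt
          have hev : ∀ᶠ s in nhds t, r.eval s < 0 :=
            hcont.eventually_lt continuousAt_const hneg
          have hev' : ∀ᶠ s in nhdsWithin t {t}ᶜ, r.eval s < 0 :=
            hev.filter_mono nhdsWithin_le_nhds
          obtain ⟨s, hs1, hs2⟩ := (hev'.and eventually_mem_nhdsWithin).exists
          exact absurd (hrpos' s hs2) (not_le.mpr hs1)
        · exact hrpos' t ht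
      -- r ≠ 0
      have hrne : r ≠ 0 := by
        intro hr0
        rw [hr0, mul_zero] at hgr
        have : p = C m := by rw [← sub_eq_zero]; exact hgr
        exact h0 (this ▸ natDegree_C m)
      -- degree bound
      have hXC : ((X - C t₀) ^ 2 : Polynomial ℝ) ≠ 0 := by
        exact pow_ne_zero _ (X_sub_C_ne_zero t₀)
      have hdr : r.natDegree ≤ 2 * n := by
        have h1 : g.natDegree ≤ p.natDegree := by
          calc g.natDegree ≤ max p.natDegree (C m).natDegree := natDegree_sub_le _ _
          _ = p.natDegree := by simp
        have h2 : g.natDegree = 2 + r.natDegree := by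
          rw [hgr, natDegree_mul hXC hrne]
          simp [natDegree_pow]
        omega
      obtain ⟨l, hl, hlsum⟩ := ih r hdr hrpos
      have hm0 : 0 ≤ m := hpos t₀
      refine ⟨C (Real.sqrt m) :: l.map (fun q => (X - C t₀) * q), ?_, ?_⟩
      · intro q hq
        rcases List.mem_cons.mp hq with rfl | hq
        · simp
        · obtain ⟨q', hq', rfl⟩ := List.mem_map.mp hq
          calc ((X - C t₀) * q').natDegree ≤ (X - C t₀).natDegree + q'.natDegree :=
              natDegree_mul_le
          _ ≤ 1 + n := by
              have := hl q' hq'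
              simp [natDegree_X_sub_C]
              omega
          _ = n + 1 := by omega
      · have hp : p = C m + (X - C t₀) ^ 2 * r := by
          rw [← hgr, hg]; ring
        rw [hp, hlsum]
        simp only [List.map_cons, List.map_map, List.sum_cons]
        have hcsq : (C (Real.sqrt m)) ^ 2 = C m := by
          rw [← C_pow, Real.sq_sqrt hm0]
        rw [hcsq]
        congr 1
        have : ((fun x => x ^ 2) ∘ fun q => (X - C t₀) * q) =
            fun q => (X - C t₀) ^ 2 * q ^ 2 := by
          funext q; simp [mul_pow]
        rw [this]
        have : (fun q : Polynomial ℝ => (X - C t₀) ^ 2 * q ^ 2) =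
            (fun q => (X - C t₀) ^ 2 * q) ∘ (fun q => q ^ 2) := rfl
        rw [this, ← List.map_map, list_map_mul_sum]

/-- For `n = 2k` even, the closed convex hull `K` of the rational normal
curve `{(t, t², …, tⁿ) : t ∈ ℝ}` in `ℝⁿ` is exactly the set of `x` whose
Hankel matrix `H(x)` (with `x_0 := 1`) is positive semidefinite. -/
theorem stmt19 (k : ℕ) :
    closure (convexHull ℝ
        {x : Fin (2 * k) → ℝ | ∃ t : ℝ,
          x = fun m : Fin (2 * k) => t ^ ((m : ℕ) + 1)}) =
      {x : Fin (2 * k) → ℝ | (hankelMatrix k x).PosSemidef} := by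
  set S : Set (Fin (2 * k) → ℝ) :=
    {x | ∃ t : ℝ, x = fun m : Fin (2 * k) => t ^ ((m : ℕ) + 1)} with hS
  have hherm : ∀ x, (hankelMatrix k x).IsHermitian := by
    intro x
    ext i j
    rw [Matrix.conjTranspose_apply, star_trivial, hankel_eq_xext, hankel_eq_xext,
      Nat.add_comm]
  have hcurve : ∀ t : ℝ,
      (hankelMatrix k (fun m : Fin (2 * k) => t ^ ((m : ℕ) + 1))).PosSemidef := by
    intro t
    have hH : ∀ i j : Fin (k + 1),
        hankelMatrix k (fun m : Fin (2 * k) => t ^ ((m : ℕ) + 1)) i j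
          = t ^ ((i : ℕ) + (j : ℕ)) := by
      intro i j
      have hi := i.isLt; have hj := j.isLt
      rw [hankel_eq_xext]
      simp only [xext]
      split_ifs with h h2
      · rw [h]; simp
      · congr 1; omega
      · omega
    refine .of_dotProduct_mulVec_nonneg (hherm _) fun v => ?_
    have hsq : dotProduct (star v)
        ((hankelMatrix k (fun m : Fin (2 * k) => t ^ ((m : ℕ) + 1))).mulVec v)
        = (∑ i : Fin (k + 1), v i * t ^ (i : ℕ)) ^ 2 := by
      simp only [dotProduct, Matrix.mulVec, star_trivial, hH, Finset.mul_sum, sq,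
        Finset.sum_mul]
      refine Finset.sum_congr rfl fun i _ => Finset.sum_congr rfl fun j _ => ?_
      rw [pow_add]; ring
    rw [hsq]
    exact sq_nonneg _
  have hsmuladd : ∀ (a b : ℝ), a + b = 1 → ∀ x y : Fin (2 * k) → ℝ,
      hankelMatrix k (a • x + b • y) = a • hankelMatrix k x + b • hankelMatrix k y := by
    intro a b hab x y
    ext i j
    simp only [Matrix.add_apply, Matrix.smul_apply, hankel_eq_xext, smul_eq_mul, xext]
    split_ifs with h h2
    · linarith
    · simp only [Pi.add_apply, Pi.smul_apply, smul_eq_mul]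
    · simp
  have hconv : Convex ℝ {x : Fin (2 * k) → ℝ | (hankelMatrix k x).PosSemidef} := by
    intro x hx y hy a b ha hb hab
    refine .of_dotProduct_mulVec_nonneg (hherm _) fun v => ?_
    rw [hsmuladd a b hab x y, Matrix.add_mulVec, Matrix.smul_mulVec,
      Matrix.smul_mulVec, dotProduct_add, dotProduct_smul,
      dotProduct_smul]
    have hqx := hx.dotProduct_mulVec_nonneg v
    have hqy := hy.dotProduct_mulVec_nonneg v
    exact add_nonneg (mul_nonneg ha hqx) (mul_nonneg hb hqy)
  have hcont : ∀ i j : Fin (k + 1),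
      Continuous fun x : Fin (2 * k) → ℝ => hankelMatrix k x i j := by
    intro i j
    simp only [hankel_eq_xext, xext]
    split_ifs with h h2
    · exact continuous_const
    · exact continuous_apply _
    · exact continuous_const
  have hclosed : IsClosed {x : Fin (2 * k) → ℝ | (hankelMatrix k x).PosSemidef} := by
    have hset : {x : Fin (2 * k) → ℝ | (hankelMatrix k x).PosSemidef}
        = ⋂ v : Fin (k + 1) → ℝ,
          {x | 0 ≤ dotProduct (star v) ((hankelMatrix k x).mulVec v)} := by
      ext x
      simp only [Set.mem_setOf_eq, Set.mem_iInter]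
      exact ⟨fun hx v => hx.dotProduct_mulVec_nonneg v, fun h => .of_dotProduct_mulVec_nonneg (hherm x) h⟩
    rw [hset]
    refine isClosed_iInter fun v => ?_
    refine isClosed_le continuous_const ?_
    simp only [dotProduct, Matrix.mulVec, star_trivial]
    refine continuous_finset_sum _ fun i _ => ?_
    refine Continuous.mul continuous_const ?_
    refine continuous_finset_sum _ fun j _ => ?_
    exact (hcont i j).mul continuous_const
  apply Set.Subset.antisymm
  · refine closure_minimal (convexHull_min ?_ hconv) hclosed
    rintro x ⟨t, rfl⟩
    exact hcurve t
  · intro x hx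
    by_contra hmem
    have hSconv : Convex ℝ (closure (convexHull ℝ S)) := (convex_convexHull ℝ S).closure
    obtain ⟨f, u, hfx, hfb⟩ :=
      geometric_hahn_banach_point_closed hSconv isClosed_closure hmem
    set a : Fin (2 * k) → ℝ := fun m => f (Pi.single m 1) with ha
    have hf : ∀ y : Fin (2 * k) → ℝ, f y = ∑ m : Fin (2 * k), y m * a m := by
      intro y
      conv_lhs => rw [← Finset.univ_sum_single y]
      rw [map_sum]
      refine Finset.sum_congr rfl fun m _ => ?_
      have hsingle : Pi.single m (y m) = y m • (Pi.single m (1 : ℝ) : Fin (2 * k) → ℝ) := by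
        rw [← Pi.single_smul]; simp
      rw [hsingle, _root_.map_smul, smul_eq_mul, ha]
    set p : Polynomial ℝ := C (-u) + ∑ m : Fin (2 * k), monomial ((m : ℕ) + 1) (a m) with hp
    have hdeg : p.natDegree ≤ 2 * k := by
      refine le_trans (natDegree_add_le _ _) ?_
      simp only [max_le_iff, natDegree_C]
      refine ⟨Nat.zero_le _, ?_⟩
      refine Polynomial.natDegree_sum_le_of_forall_le _ _ fun m _ => ?_
      refine le_trans (natDegree_monomial_le _) ?_
      have := m.isLt; omega
    have heval : ∀ t : ℝ, p.eval t = f (fun m : Fin (2 * k) => t ^ ((m : ℕ) + 1)) - u := by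
      intro t
      rw [hf]
      simp only [hp, eval_add, eval_C, eval_finset_sum, eval_monomial]
      have hcomm : ∑ m : Fin (2 * k), a m * t ^ ((m : ℕ) + 1)
          = ∑ m : Fin (2 * k), t ^ ((m : ℕ) + 1) * a m :=
        Finset.sum_congr rfl fun m _ => mul_comm _ _
      rw [hcomm]; ring
    have hpos : ∀ t : ℝ, 0 ≤ p.eval t := by
      intro t
      have hcmem : (fun m : Fin (2 * k) => t ^ ((m : ℕ) + 1)) ∈ closure (convexHull ℝ S) :=
        subset_closure (subset_convexHull ℝ S ⟨t, rfl⟩)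
      have := hfb _ hcmem
      rw [heval t]; linarith
    obtain ⟨l, hl, hsum⟩ := sos_aux k p hdeg hpos
    have hLp : 0 ≤ L k x p := by
      rw [hsum, L_list_sum, List.map_map]
      refine List.sum_nonneg fun r hr => ?_
      obtain ⟨q, hq, rfl⟩ := List.mem_map.mp hr
      exact L_sq_nonneg k x hx q (hl q hq)
    have hLp' : L k x p = f x - u := by
      rw [hp, L_add, L_finset_sum]
      have h1 : L k x (C (-u)) = -u := by
        rw [← monomial_zero_left, L_monomial k x 0 (Nat.zero_le _) (-u)]
        simp [xext]
      have h2 : ∀ m : Fin (2 * k), L k x (monomial ((m : ℕ) + 1) (a m)) = a m * x m := by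
        intro m
        have hm := m.isLt
        rw [L_monomial k x ((m : ℕ) + 1) (by omega) (a m)]
        congr 1
        simp only [xext]
        rw [dif_neg (by omega), dif_pos (by omega : (m : ℕ) + 1 - 1 < 2 * k)]
        exact congrArg x (Fin.ext (by simp))
      rw [Finset.sum_congr rfl fun m _ => h2 m, h1, hf x]
      have hcomm : ∑ m : Fin (2 * k), a m * x m = ∑ m : Fin (2 * k), x m * a m :=
        Finset.sum_congr rfl fun m _ => mul_comm _ _
      rw [hcomm]; ring
    linarith
end
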